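/- Let R be a ring and M a right R-module which is a generator; let W = End_R(M) and let α be an anti-endomorphism of W. If α is injective, then b_α is left injective. If α is bijective, then b_α is both right and left regular. -/

import Mathlib

open MulOpposite TensorProduct Function

universe u v w v'

section Core

/-- An anti-endomorphism of a ring: additive, unital, reverses multiplication. -/
def IsAntiEndo {W : Type*} [Ring W] (α : W → W) : Prop :=
  (∀ u v : W, α (u + v) = α u + α v) ∧ α 1 = 1 ∧ ∀ u v : W, α (u * v) = α v * α u

/-- An anti-automorphism of a ring: a bijective anti-endomorphism. -/
def IsAntiAuto {W : Type*} [Ring W] (α : W → W) : Prop :=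
  IsAntiEndo α ∧ Function.Bijective α

/-- An inner automorphism of a ring: conjugation by a unit. -/
def IsInnerAut {W : Type*} [Ring W] (φ : W → W) : Prop :=
  ∃ u : Wˣ, ∀ w : W, φ w = ↑u * w * ↑u⁻¹

variable (R : Type u) [Ring R]

/-- A double `R`-module structure on the additive group `K`: two commuting
right `R`-module structures `m0` and `m1`. -/
structure DoubleModule (K : Type v) [AddCommGroup K] where
  m0 : K → R → K
  m1 : K → R → K
  m0_add_left : ∀ (k k' : K) (r : R), m0 (k + k') r = m0 k r + m0 k' r
  m0_add_right : ∀ (k : K) (r r' : R), m0 k (r + r') = m0 k r + m0 k r'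
  m0_mul : ∀ (k : K) (r r' : R), m0 k (r * r') = m0 (m0 k r) r'
  m0_one : ∀ k : K, m0 k 1 = k
  m1_add_left : ∀ (k k' : K) (r : R), m1 (k + k') r = m1 k r + m1 k' r
  m1_add_right : ∀ (k : K) (r r' : R), m1 k (r + r') = m1 k r + m1 k r'
  m1_mul : ∀ (k : K) (r r' : R), m1 k (r * r') = m1 (m1 k r) r'
  m1_one : ∀ k : K, m1 k 1 = k
  comm : ∀ (k : K) (a b : R), m1 (m0 k a) b = m0 (m1 k b) a

variable {R}

/-- A homomorphism of double `R`-modules. -/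
def IsDoubleHom {K : Type v} {K' : Type w} [AddCommGroup K] [AddCommGroup K']
    (DK : DoubleModule R K) (DK' : DoubleModule R K') (f : K → K') : Prop :=
  (∀ k k' : K, f (k + k') = f k + f k') ∧
  (∀ (k : K) (r : R), f (DK.m0 k r) = DK'.m0 (f k) r) ∧
  (∀ (k : K) (r : R), f (DK.m1 k r) = DK'.m1 (f k) r)

/-- An isomorphism of double `R`-modules. -/
def IsDoubleIso {K : Type v} {K' : Type w} [AddCommGroup K] [AddCommGroup K']
    (DK : DoubleModule R K) (DK' : DoubleModule R K') (f : K → K') : Prop :=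
  IsDoubleHom DK DK' f ∧ Function.Bijective f

/-- An anti-automorphism of a double `R`-module: an additive bijection exchanging
the two module structures. -/
def IsDoubleAntiAuto {K : Type v} [AddCommGroup K] (DK : DoubleModule R K) (θ : K → K) : Prop :=
  Function.Bijective θ ∧ (∀ k k' : K, θ (k + k') = θ k + θ k') ∧
  (∀ (k : K) (r : R), θ (DK.m0 k r) = DK.m1 (θ k) r) ∧
  (∀ (k : K) (r : R), θ (DK.m1 k r) = DK.m0 (θ k) r)

variable (R)

/-- A general bilinear form on a right `R`-module `M` (encoded as a module over `Rᵐᵒᵖ`)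
with values in a double `R`-module `(K, DK)`. -/
structure GBF (M : Type v) [AddCommGroup M] [Module Rᵐᵒᵖ M]
    (K : Type w) [AddCommGroup K] (DK : DoubleModule R K) where
  b : M → M → K
  add_left : ∀ x x' y : M, b (x + x') y = b x y + b x' y
  add_right : ∀ x y y' : M, b x (y + y') = b x y + b x y'
  smul_left : ∀ (x y : M) (r : R), b (op r • x) y = DK.m0 (b x y) r
  smul_right : ∀ (x y : M) (r : R), b x (op r • y) = DK.m1 (b x y) r

variable {R}

namespace GBF

variable {M : Type v} [AddCommGroup M] [Module Rᵐᵒᵖ M]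
  {K : Type w} [AddCommGroup K] {DK : DoubleModule R K}

/-- The right adjoint of `β` is injective. -/
def RightInjective (β : GBF R M K DK) : Prop :=
  ∀ x x' : M, (∀ y : M, β.b y x = β.b y x') → x = x'

/-- The right adjoint of `β` is bijective onto `Hom_R(M, K₀)`. -/
def RightRegular (β : GBF R M K DK) : Prop :=
  β.RightInjective ∧
  ∀ f : M → K, (∀ y y' : M, f (y + y') = f y + f y') →
    (∀ (y : M) (r : R), f (op r • y) = DK.m0 (f y) r) →
    ∃ x : M, ∀ y : M, f y = β.b y x

/-- The left adjoint of `β` is injective. -/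
def LeftInjective (β : GBF R M K DK) : Prop :=
  ∀ x x' : M, (∀ y : M, β.b x y = β.b x' y) → x = x'

/-- The left adjoint of `β` is bijective onto `Hom_R(M, K₁)`. -/
def LeftRegular (β : GBF R M K DK) : Prop :=
  β.LeftInjective ∧
  ∀ f : M → K, (∀ y y' : M, f (y + y') = f y + f y') →
    (∀ (y : M) (r : R), f (op r • y) = DK.m1 (f y) r) →
    ∃ x : M, ∀ y : M, f y = β.b x y

/-- `α` is an adjoint anti-endomorphism for `β`: `β(w x, y) = β(x, α(w) y)`. -/
def IsAdjoint (β : GBF R M K DK) (α : Module.End Rᵐᵒᵖ M → Module.End Rᵐᵒᵖ M) : Prop :=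
  ∀ (w : Module.End Rᵐᵒᵖ M) (x y : M), β.b (w x) y = β.b x (α w y)

/-- Similarity of general bilinear forms on the same module. -/
def Similar {K' : Type v'} [AddCommGroup K'] {DK' : DoubleModule R K'}
    (β : GBF R M K DK) (β' : GBF R M K' DK') : Prop :=
  ∃ f : K → K', IsDoubleIso DK DK' f ∧ ∀ x y : M, β'.b x y = f (β.b x y)

end GBF

section Kalpha

variable {M : Type v} [AddCommGroup M] [Module Rᵐᵒᵖ M]

/-- The subgroup of `M ⊗_ℤ M` generated by the elements `(w x) ⊗ y - x ⊗ (α w y)`. -/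
def kalphaRel (α : Module.End Rᵐᵒᵖ M → Module.End Rᵐᵒᵖ M) : Submodule ℤ (M ⊗[ℤ] M) :=
  Submodule.span ℤ
    {z | ∃ (w : Module.End Rᵐᵒᵖ M) (x y : M), z = (w x) ⊗ₜ[ℤ] y - x ⊗ₜ[ℤ] (α w y)}

/-- `K_α`, the quotient of `M ⊗_ℤ M` by the relations `(w x) ⊗ y = x ⊗ (α w y)`. -/
abbrev Kalpha (α : Module.End Rᵐᵒᵖ M → Module.End Rᵐᵒᵖ M) : Type _ :=
  (M ⊗[ℤ] M) ⧸ kalphaRel α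

/-- The map `x ⊗ y ↦ (x·r) ⊗ y` on `M ⊗_ℤ M`. -/
noncomputable def smulLeftMap (r : R) : (M ⊗[ℤ] M) →ₗ[ℤ] (M ⊗[ℤ] M) :=
  TensorProduct.map ((DistribMulAction.toAddMonoidHom M (op r : Rᵐᵒᵖ)).toIntLinearMap)
    LinearMap.id

/-- The map `x ⊗ y ↦ x ⊗ (y·r)` on `M ⊗_ℤ M`. -/
noncomputable def smulRightMap (r : R) : (M ⊗[ℤ] M) →ₗ[ℤ] (M ⊗[ℤ] M) :=
  TensorProduct.map LinearMap.id
    ((DistribMulAction.toAddMonoidHom M (op r : Rᵐᵒᵖ)).toIntLinearMap)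

theorem smulLeftMap_tmul (r : R) (x y : M) :
    smulLeftMap (M := M) r (x ⊗ₜ[ℤ] y) = (op r • x) ⊗ₜ[ℤ] y := rfl

theorem smulRightMap_tmul (r : R) (x y : M) :
    smulRightMap (M := M) r (x ⊗ₜ[ℤ] y) = x ⊗ₜ[ℤ] (op r • y) := rfl

theorem kalphaRel_le_left (α : Module.End Rᵐᵒᵖ M → Module.End Rᵐᵒᵖ M) (r : R) :
    kalphaRel α ≤ (kalphaRel α).comap (smulLeftMap (M := M) r) := by
  rw [kalphaRel, Submodule.span_le]
  rintro _ ⟨w, x, y, rfl⟩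
  rw [SetLike.mem_coe, Submodule.mem_comap, map_sub]
  have h1 : smulLeftMap (M := M) r ((w x) ⊗ₜ[ℤ] y) = (w (op r • x)) ⊗ₜ[ℤ] y := by
    rw [smulLeftMap_tmul, map_smul]
  have h2 : smulLeftMap (M := M) r (x ⊗ₜ[ℤ] (α w y)) = (op r • x) ⊗ₜ[ℤ] (α w y) := by
    rw [smulLeftMap_tmul]
  rw [h1, h2]
  exact Submodule.subset_span ⟨w, op r • x, y, rfl⟩

theorem kalphaRel_le_right (α : Module.End Rᵐᵒᵖ M → Module.End Rᵐᵒᵖ M) (r : R) :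
    kalphaRel α ≤ (kalphaRel α).comap (smulRightMap (M := M) r) := by
  rw [kalphaRel, Submodule.span_le]
  rintro _ ⟨w, x, y, rfl⟩
  rw [SetLike.mem_coe, Submodule.mem_comap, map_sub]
  have h1 : smulRightMap (M := M) r ((w x) ⊗ₜ[ℤ] y) = (w x) ⊗ₜ[ℤ] (op r • y) := by
    rw [smulRightMap_tmul]
  have h2 : smulRightMap (M := M) r (x ⊗ₜ[ℤ] (α w y)) = x ⊗ₜ[ℤ] (α w (op r • y)) := by
    rw [smulRightMap_tmul, map_smul]
  rw [h1, h2]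
  exact Submodule.subset_span ⟨w, x, op r • y, rfl⟩

/-- The `m0`-action on `K_α`. -/
noncomputable def kSmul0 (α : Module.End Rᵐᵒᵖ M → Module.End Rᵐᵒᵖ M) (r : R) :
    Kalpha α →ₗ[ℤ] Kalpha α :=
  Submodule.mapQ _ _ (smulLeftMap r) (kalphaRel_le_left α r)

/-- The `m1`-action on `K_α`. -/
noncomputable def kSmul1 (α : Module.End Rᵐᵒᵖ M → Module.End Rᵐᵒᵖ M) (r : R) :
    Kalpha α →ₗ[ℤ] Kalpha α :=
  Submodule.mapQ _ _ (smulRightMap r) (kalphaRel_le_right α r)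

theorem kSmul0_mk (α : Module.End Rᵐᵒᵖ M → Module.End Rᵐᵒᵖ M) (r : R) (t : M ⊗[ℤ] M) :
    kSmul0 α r (Submodule.Quotient.mk t) = Submodule.Quotient.mk (smulLeftMap r t) := rfl

theorem kSmul1_mk (α : Module.End Rᵐᵒᵖ M → Module.End Rᵐᵒᵖ M) (r : R) (t : M ⊗[ℤ] M) :
    kSmul1 α r (Submodule.Quotient.mk t) = Submodule.Quotient.mk (smulRightMap r t) := rfl

/-- The double `R`-module structure on `K_α`. -/
noncomputable def KalphaDM (α : Module.End Rᵐᵒᵖ M → Module.End Rᵐᵒᵖ M) :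
    DoubleModule R (Kalpha α) where
  m0 k r := kSmul0 α r k
  m1 k r := kSmul1 α r k
  m0_add_left k k' r := map_add _ k k'
  m0_add_right := by
    intro k r r'
    induction k using Submodule.Quotient.induction_on with
    | _ t =>
      rw [kSmul0_mk, kSmul0_mk, kSmul0_mk, ← Submodule.Quotient.mk_add]
      congr 1
      induction t with
      | zero => simp
      | tmul x y => simp [smulLeftMap_tmul, op_add, add_smul, TensorProduct.add_tmul]
      | add a b ha hb => rw [map_add, map_add, map_add, ha, hb]; abel
  m0_mul := by
    intro k r r'
    induction k using Submodule.Quotient.induction_on with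
    | _ t =>
      rw [kSmul0_mk, kSmul0_mk, kSmul0_mk]
      congr 1
      induction t with
      | zero => simp
      | tmul x y => simp [smulLeftMap_tmul, op_mul, mul_smul]
      | add a b ha hb => rw [map_add, map_add, map_add, ha, hb]
  m0_one := by
    intro k
    induction k using Submodule.Quotient.induction_on with
    | _ t =>
      rw [kSmul0_mk]
      congr 1
      induction t with
      | zero => simp
      | tmul x y => simp [smulLeftMap_tmul]
      | add a b ha hb => rw [map_add, ha, hb]
  m1_add_left k k' r := map_add _ k k'
  m1_add_right := by
    intro k r r'
    induction k using Submodule.Quotient.induction_on with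
    | _ t =>
      rw [kSmul1_mk, kSmul1_mk, kSmul1_mk, ← Submodule.Quotient.mk_add]
      congr 1
      induction t with
      | zero => simp
      | tmul x y => simp [smulRightMap_tmul, op_add, add_smul, TensorProduct.tmul_add]
      | add a b ha hb => rw [map_add, map_add, map_add, ha, hb]; abel
  m1_mul := by
    intro k r r'
    induction k using Submodule.Quotient.induction_on with
    | _ t =>
      rw [kSmul1_mk, kSmul1_mk, kSmul1_mk]
      congr 1
      induction t with
      | zero => simp
      | tmul x y => simp [smulRightMap_tmul, op_mul, mul_smul]
      | add a b ha hb => rw [map_add, map_add, map_add, ha, hb]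
  m1_one := by
    intro k
    induction k using Submodule.Quotient.induction_on with
    | _ t =>
      rw [kSmul1_mk]
      congr 1
      induction t with
      | zero => simp
      | tmul x y => simp [smulRightMap_tmul]
      | add a b ha hb => rw [map_add, ha, hb]
  comm := by
    intro k a c
    induction k using Submodule.Quotient.induction_on with
    | _ t =>
      rw [kSmul0_mk, kSmul1_mk, kSmul1_mk, kSmul0_mk]
      congr 1
      induction t with
      | zero => simp
      | tmul x y => simp [smulLeftMap_tmul, smulRightMap_tmul]
      | add p q hp hq => rw [map_add, map_add, map_add, map_add, hp, hq]

/-- The universal general bilinear form `b_α : M × M → K_α`. -/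
noncomputable def balpha (α : Module.End Rᵐᵒᵖ M → Module.End Rᵐᵒᵖ M) :
    GBF R M (Kalpha α) (KalphaDM α) where
  b x y := Submodule.Quotient.mk (x ⊗ₜ[ℤ] y)
  add_left x x' y := by
    rw [TensorProduct.add_tmul, Submodule.Quotient.mk_add]
  add_right x y y' := by
    rw [TensorProduct.tmul_add, Submodule.Quotient.mk_add]
  smul_left x y r := by
    show _ = kSmul0 α r (Submodule.Quotient.mk (x ⊗ₜ[ℤ] y))
    rw [kSmul0_mk]
    congr 1
  smul_right x y r := by
    show _ = kSmul1 α r (Submodule.Quotient.mk (x ⊗ₜ[ℤ] y))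
    rw [kSmul1_mk]
    congr 1

end Kalpha

end Core

/-- `M` is a generator of `Mod-R`: `R_R` is a direct summand of `Mⁿ` for some `n ∈ ℕ`. -/
def IsGenerator (R : Type u) [Ring R] (M : Type v) [AddCommGroup M] [Module Rᵐᵒᵖ M] : Prop :=
  ∃ (n : ℕ) (i : R →ₗ[Rᵐᵒᵖ] (Fin n → M)) (p : (Fin n → M) →ₗ[Rᵐᵒᵖ] R), ∀ r : R, p (i r) = r


namespace Stmt15Aux

variable {R : Type u} [Ring R] {M : Type v} [AddCommGroup M] [Module Rᵐᵒᵖ M]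

/-- The rank-one-type endomorphism `m ↦ x · g m`. -/
def tens (x : M) (g : M →ₗ[Rᵐᵒᵖ] R) : Module.End Rᵐᵒᵖ M where
  toFun m := op (g m) • x
  map_add' m m' := by simp only [map_add, op_add, add_smul]
  map_smul' r m := by
    simp only [map_smul, RingHom.id_apply]
    rcases r with ⟨r⟩
    show op ((g m) * unop (op r)) • x = op r • op (g m) • x
    rw [unop_op, op_mul, mul_smul]

@[simp] lemma tens_apply (x : M) (g : M →ₗ[Rᵐᵒᵖ] R) (m : M) :
    tens x g m = op (g m) • x := rfl

lemma tens_add (x x' : M) (g : M →ₗ[Rᵐᵒᵖ] R) :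
    tens (x + x') g = tens x g + tens x' g := by
  ext m; simp [smul_add]

lemma tens_zsmul (n : ℤ) (x : M) (g : M →ₗ[Rᵐᵒᵖ] R) :
    tens (n • x) g = n • tens x g := by
  ext m
  show op (g m) • n • x = n • (op (g m) • x)
  rw [smul_comm]

lemma mul_tens (w : Module.End Rᵐᵒᵖ M) (x : M) (g : M →ₗ[Rᵐᵒᵖ] R) :
    w * tens x g = tens (w x) g := by
  ext m
  show w (op (g m) • x) = op (g m) • w x
  rw [map_smul]

/-- The bilinear map `(x, y) ↦ γ(x ⊗ g)(y)` on `M ⊗[ℤ] M`. -/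
noncomputable def Tlin (γ : Module.End Rᵐᵒᵖ M → Module.End Rᵐᵒᵖ M)
    (hγ : ∀ u v : Module.End Rᵐᵒᵖ M, γ (u + v) = γ u + γ v)
    (g : M →ₗ[Rᵐᵒᵖ] R) : M ⊗[ℤ] M →ₗ[ℤ] M :=
  TensorProduct.lift <| LinearMap.mk₂ ℤ (fun x y => γ (tens x g) y)
    (fun x x' y => by
      show γ (tens (x + x') g) y = γ (tens x g) y + γ (tens x' g) y
      rw [tens_add, hγ]; rfl)
    (fun n x y => by
      show (AddMonoidHom.mk' γ hγ) (tens (n • x) g) y = n • γ (tens x g) y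
      rw [tens_zsmul, AddMonoidHom.map_zsmul]
      exact LinearMap.smul_apply _ _ _)
    (fun x y y' => map_add _ _ _)
    (fun n x y => map_zsmul _ _ _)

@[simp] lemma Tlin_tmul (γ : Module.End Rᵐᵒᵖ M → Module.End Rᵐᵒᵖ M)
    (hγ : ∀ u v : Module.End Rᵐᵒᵖ M, γ (u + v) = γ u + γ v)
    (g : M →ₗ[Rᵐᵒᵖ] R) (x y : M) :
    Tlin γ hγ g (x ⊗ₜ[ℤ] y) = γ (tens x g) y := rfl

/-- The bilinear map `(x, y) ↦ γ(y ⊗ g)(x)` on `M ⊗[ℤ] M`. -/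
noncomputable def Slin (γ : Module.End Rᵐᵒᵖ M → Module.End Rᵐᵒᵖ M)
    (hγ : ∀ u v : Module.End Rᵐᵒᵖ M, γ (u + v) = γ u + γ v)
    (g : M →ₗ[Rᵐᵒᵖ] R) : M ⊗[ℤ] M →ₗ[ℤ] M :=
  TensorProduct.lift <| LinearMap.mk₂ ℤ (fun x y => γ (tens y g) x)
    (fun x x' y => map_add _ _ _)
    (fun n x y => map_zsmul _ _ _)
    (fun x y y' => by
      show γ (tens (y + y') g) x = γ (tens y g) x + γ (tens y' g) x
      rw [tens_add, hγ]; rfl)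
    (fun n x y => by
      show (AddMonoidHom.mk' γ hγ) (tens (n • y) g) x = n • γ (tens y g) x
      rw [tens_zsmul, AddMonoidHom.map_zsmul]
      exact LinearMap.smul_apply _ _ _)

@[simp] lemma Slin_tmul (γ : Module.End Rᵐᵒᵖ M → Module.End Rᵐᵒᵖ M)
    (hγ : ∀ u v : Module.End Rᵐᵒᵖ M, γ (u + v) = γ u + γ v)
    (g : M →ₗ[Rᵐᵒᵖ] R) (x y : M) :
    Slin γ hγ g (x ⊗ₜ[ℤ] y) = γ (tens y g) x := rfl

lemma Tlin_ker {α : Module.End Rᵐᵒᵖ M → Module.End Rᵐᵒᵖ M}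
    (hα : IsAntiEndo α) (g : M →ₗ[Rᵐᵒᵖ] R) :
    kalphaRel α ≤ LinearMap.ker (Tlin α hα.1 g) := by
  rw [kalphaRel, Submodule.span_le]
  rintro _ ⟨w, x, y, rfl⟩
  rw [SetLike.mem_coe, LinearMap.mem_ker, map_sub, Tlin_tmul, Tlin_tmul,
    ← mul_tens w x g, hα.2.2]
  exact sub_eq_zero_of_eq rfl

lemma Slin_ker {α β : Module.End Rᵐᵒᵖ M → Module.End Rᵐᵒᵖ M}
    (hβadd : ∀ u v, β (u + v) = β u + β v)
    (hβmul : ∀ u v, β (u * v) = β v * β u)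
    (hβα : ∀ w, β (α w) = w) (g : M →ₗ[Rᵐᵒᵖ] R) :
    kalphaRel α ≤ LinearMap.ker (Slin β hβadd g) := by
  rw [kalphaRel, Submodule.span_le]
  rintro _ ⟨w, x, y, rfl⟩
  rw [SetLike.mem_coe, LinearMap.mem_ker, map_sub, Slin_tmul, Slin_tmul,
    ← mul_tens (α w) y g, hβmul, hβα]
  exact sub_eq_zero_of_eq rfl

/-- `T`-extraction map `K_α → M`, `x ⊗ y ↦ α(x ⊗ g) y`. -/
noncomputable def Tq {α : Module.End Rᵐᵒᵖ M → Module.End Rᵐᵒᵖ M}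
    (hα : IsAntiEndo α) (g : M →ₗ[Rᵐᵒᵖ] R) :
    Kalpha α →ₗ[ℤ] M :=
  Submodule.liftQ _ (Tlin α hα.1 g) (Tlin_ker hα g)

@[simp] lemma Tq_mk {α : Module.End Rᵐᵒᵖ M → Module.End Rᵐᵒᵖ M}
    (hα : IsAntiEndo α) (g : M →ₗ[Rᵐᵒᵖ] R) (t : M ⊗[ℤ] M) :
    Tq hα g (Submodule.Quotient.mk t) = Tlin α hα.1 g t := rfl

/-- `S`-extraction map `K_α → M`, `x ⊗ y ↦ α⁻¹(y ⊗ g) x`. -/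
noncomputable def Sq {α β : Module.End Rᵐᵒᵖ M → Module.End Rᵐᵒᵖ M}
    (hβadd : ∀ u v, β (u + v) = β u + β v)
    (hβmul : ∀ u v, β (u * v) = β v * β u)
    (hβα : ∀ w : Module.End Rᵐᵒᵖ M, β (α w) = w) (g : M →ₗ[Rᵐᵒᵖ] R) :
    Kalpha α →ₗ[ℤ] M :=
  Submodule.liftQ _ (Slin β hβadd g) (Slin_ker hβadd hβmul hβα g)

@[simp] lemma Sq_mk {α β : Module.End Rᵐᵒᵖ M → Module.End Rᵐᵒᵖ M}
    (hβadd : ∀ u v, β (u + v) = β u + β v)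
    (hβmul : ∀ u v, β (u * v) = β v * β u)
    (hβα : ∀ w : Module.End Rᵐᵒᵖ M, β (α w) = w) (g : M →ₗ[Rᵐᵒᵖ] R)
    (t : M ⊗[ℤ] M) :
    Sq (α := α) hβadd hβmul hβα g (Submodule.Quotient.mk t) = Slin β hβadd g t := rfl

/-- The fundamental relation in `K_α`. -/
lemma mk_rel (α : Module.End Rᵐᵒᵖ M → Module.End Rᵐᵒᵖ M)
    (w : Module.End Rᵐᵒᵖ M) (x y : M) :
    (Submodule.Quotient.mk ((w x) ⊗ₜ[ℤ] y) : Kalpha α) =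
      Submodule.Quotient.mk (x ⊗ₜ[ℤ] (α w y)) := by
  rw [Submodule.Quotient.eq]
  exact Submodule.subset_span ⟨w, x, y, rfl⟩

lemma Tq_smul1 {α : Module.End Rᵐᵒᵖ M → Module.End Rᵐᵒᵖ M}
    (hα : IsAntiEndo α) (g : M →ₗ[Rᵐᵒᵖ] R) (r : R) (k : Kalpha α) :
    Tq hα g (kSmul1 α r k) = op r • Tq hα g k := by
  induction k using Submodule.Quotient.induction_on with
  | _ t =>
    rw [kSmul1_mk, Tq_mk, Tq_mk]
    induction t with
    | zero => simp only [map_zero, smul_zero]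
    | tmul x y =>
      have h : smulRightMap (M := M) r (x ⊗ₜ[ℤ] y) = x ⊗ₜ[ℤ] (op r • y) := by
        exact smulRightMap_tmul r x y
      rw [h, Tlin_tmul, Tlin_tmul, map_smul]
    | add a b ha hb => rw [map_add, map_add, map_add, ha, hb, smul_add]

lemma Sq_smul0 {α β : Module.End Rᵐᵒᵖ M → Module.End Rᵐᵒᵖ M}
    (hβadd : ∀ u v, β (u + v) = β u + β v)
    (hβmul : ∀ u v, β (u * v) = β v * β u)
    (hβα : ∀ w : Module.End Rᵐᵒᵖ M, β (α w) = w) (g : M →ₗ[Rᵐᵒᵖ] R)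
    (r : R) (k : Kalpha α) :
    Sq (α := α) hβadd hβmul hβα g (kSmul0 α r k) =
      op r • Sq (α := α) hβadd hβmul hβα g k := by
  induction k using Submodule.Quotient.induction_on with
  | _ t =>
    rw [kSmul0_mk, Sq_mk, Sq_mk]
    induction t with
    | zero => simp only [map_zero, smul_zero]
    | tmul x y =>
      have h : smulLeftMap (M := M) r (x ⊗ₜ[ℤ] y) = (op r • x) ⊗ₜ[ℤ] y := by
        exact smulLeftMap_tmul r x y
      rw [h, Slin_tmul, Slin_tmul, map_smul]
    | add a b ha hb => rw [map_add, map_add, map_add, ha, hb, smul_add]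

end Stmt15Aux

/-- If `M` is a generator and `α` is an anti-endomorphism of `End_R(M)`,
then: if `α` is injective, `b_α` is left injective; if `α` is bijective, `b_α` is right and
left regular. -/
theorem stmt_15 {R : Type u} [Ring R] {M : Type v} [AddCommGroup M] [Module Rᵐᵒᵖ M]
    (hgen : IsGenerator R M)
    (α : Module.End Rᵐᵒᵖ M → Module.End Rᵐᵒᵖ M) (hα : IsAntiEndo α) :
    (Function.Injective α → (balpha (M := M) α).LeftInjective) ∧
    (Function.Bijective α →
      (balpha (M := M) α).RightRegular ∧ (balpha (M := M) α).LeftRegular) := by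
  classical
  obtain ⟨n, i, p, hp⟩ := hgen
  -- Extract "dual basis"-type data from the generator hypothesis.
  obtain ⟨e, g, hsum⟩ : ∃ (e : Fin n → M) (g : Fin n → (M →ₗ[Rᵐᵒᵖ] R)),
      ∀ x : M, ∑ j, Stmt15Aux.tens x (g j) (e j) = x := by
    refine ⟨fun j => i 1 j, fun j => p ∘ₗ LinearMap.single Rᵐᵒᵖ (fun _ => M) j, ?_⟩
    have hone : (∑ j, (p ∘ₗ LinearMap.single Rᵐᵒᵖ (fun _ => M) j) (i 1 j)) = 1 := by
      have h1 : ∑ j : Fin n, (Pi.single j (i 1 j) : Fin n → M) = i 1 :=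
        Finset.univ_sum_single (i 1)
      calc ∑ j, (p ∘ₗ LinearMap.single Rᵐᵒᵖ (fun _ => M) j) (i 1 j)
          = p (∑ j : Fin n, (Pi.single j (i 1 j) : Fin n → M)) := by
            rw [map_sum]; rfl
        _ = 1 := by rw [h1, hp]
    intro x
    simp only [Stmt15Aux.tens_apply]
    rw [← Finset.sum_smul, ← Finset.op_sum, hone, op_one, one_smul]
  -- Left injectivity from injectivity of α.
  have LI : Function.Injective α → (balpha (M := M) α).LeftInjective := by
    intro hinj x x' h
    have htens : ∀ j, Stmt15Aux.tens x (g j) = Stmt15Aux.tens x' (g j) := by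
      intro j
      refine hinj (LinearMap.ext fun y => ?_)
      have hy := congrArg (Stmt15Aux.Tq hα (g j)) (h y)
      rwa [show (balpha (M := M) α).b x y = Submodule.Quotient.mk (x ⊗ₜ[ℤ] y) from rfl,
        show (balpha (M := M) α).b x' y = Submodule.Quotient.mk (x' ⊗ₜ[ℤ] y) from rfl,
        Stmt15Aux.Tq_mk, Stmt15Aux.Tq_mk, Stmt15Aux.Tlin_tmul, Stmt15Aux.Tlin_tmul] at hy
    calc x = ∑ j, Stmt15Aux.tens x (g j) (e j) := (hsum x).symm
      _ = ∑ j, Stmt15Aux.tens x' (g j) (e j) :=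
          Finset.sum_congr rfl fun j _ => by rw [htens j]
      _ = x' := hsum x'
  refine ⟨LI, fun hbij => ?_⟩
  -- The inverse anti-endomorphism β.
  obtain ⟨hαinj, hαsurj⟩ := hbij
  set β : Module.End Rᵐᵒᵖ M → Module.End Rᵐᵒᵖ M := Function.surjInv hαsurj with hβdef
  have hαβ : ∀ w, α (β w) = w := fun w => Function.surjInv_eq hαsurj w
  have hβα : ∀ w, β (α w) = w := fun w => hαinj (hαβ (α w))
  have hβadd : ∀ u v, β (u + v) = β u + β v := fun u v =>
    hαinj (by rw [hα.1, hαβ, hαβ, hαβ])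
  have hβmul : ∀ u v, β (u * v) = β v * β u := fun u v =>
    hαinj (by rw [hα.2.2, hαβ, hαβ, hαβ])
  have hβinj : Function.Injective β := fun u v huv => by rw [← hαβ u, huv, hαβ]
  -- The two reconstruction identities.
  have idT : ∀ k : Kalpha α,
      ∑ j, (Submodule.Quotient.mk ((e j) ⊗ₜ[ℤ] (Stmt15Aux.Tq hα (g j) k)) : Kalpha α) = k := by
    intro k
    induction k using Submodule.Quotient.induction_on with
    | _ t =>
      induction t with
      | zero => simp
      | tmul x y =>
        have step : ∀ j : Fin n,
            (Submodule.Quotient.mk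
              ((e j) ⊗ₜ[ℤ] (Stmt15Aux.Tq hα (g j) (Submodule.Quotient.mk (x ⊗ₜ[ℤ] y))))
                : Kalpha α)
              = Submodule.Quotient.mk ((Stmt15Aux.tens x (g j) (e j)) ⊗ₜ[ℤ] y) := by
          intro j
          rw [Stmt15Aux.Tq_mk, Stmt15Aux.Tlin_tmul]
          exact (Stmt15Aux.mk_rel α (Stmt15Aux.tens x (g j)) (e j) y).symm
        rw [Finset.sum_congr rfl fun j _ => step j]
        have hmk : ∑ j, (Submodule.Quotient.mk
              ((Stmt15Aux.tens x (g j) (e j)) ⊗ₜ[ℤ] y) : Kalpha α)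
            = Submodule.Quotient.mk (∑ j, (Stmt15Aux.tens x (g j) (e j)) ⊗ₜ[ℤ] y) := by
          simp only [← Submodule.mkQ_apply, ← map_sum]
        rw [hmk, ← TensorProduct.sum_tmul, hsum x]
      | add a b ha hb =>
        simp only [Submodule.Quotient.mk_add, map_add, TensorProduct.tmul_add,
          Finset.sum_add_distrib, ha, hb]
  have idS : ∀ k : Kalpha α,
      ∑ j, (Submodule.Quotient.mk
        ((Stmt15Aux.Sq (α := α) hβadd hβmul hβα (g j) k) ⊗ₜ[ℤ] (e j)) : Kalpha α) = k := by
    intro k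
    induction k using Submodule.Quotient.induction_on with
    | _ t =>
      induction t with
      | zero => simp
      | tmul x y =>
        have step : ∀ j : Fin n,
            (Submodule.Quotient.mk
              ((Stmt15Aux.Sq (α := α) hβadd hβmul hβα (g j)
                  (Submodule.Quotient.mk (x ⊗ₜ[ℤ] y))) ⊗ₜ[ℤ] (e j)) : Kalpha α)
              = Submodule.Quotient.mk (x ⊗ₜ[ℤ] (Stmt15Aux.tens y (g j) (e j))) := by
          intro j
          rw [Stmt15Aux.Sq_mk, Stmt15Aux.Slin_tmul]
          rw [Stmt15Aux.mk_rel α (β (Stmt15Aux.tens y (g j))) x (e j), hαβ]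
        rw [Finset.sum_congr rfl fun j _ => step j]
        have hmk : ∑ j, (Submodule.Quotient.mk
              (x ⊗ₜ[ℤ] (Stmt15Aux.tens y (g j) (e j))) : Kalpha α)
            = Submodule.Quotient.mk (x ⊗ₜ[ℤ] (∑ j, Stmt15Aux.tens y (g j) (e j))) := by
          simp only [← Submodule.mkQ_apply, ← TensorProduct.tmul_sum, ← map_sum]
        rw [hmk, hsum y]
      | add a b ha hb =>
        simp only [Submodule.Quotient.mk_add, map_add, TensorProduct.add_tmul,
          Finset.sum_add_distrib, ha, hb]
  -- Right injectivity.
  have RI : (balpha (M := M) α).RightInjective := by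
    intro x x' h
    have htens : ∀ j, Stmt15Aux.tens x (g j) = Stmt15Aux.tens x' (g j) := by
      intro j
      refine hβinj (LinearMap.ext fun y => ?_)
      have hy := congrArg (Stmt15Aux.Sq (α := α) hβadd hβmul hβα (g j)) (h y)
      rwa [show (balpha (M := M) α).b y x = Submodule.Quotient.mk (y ⊗ₜ[ℤ] x) from rfl,
        show (balpha (M := M) α).b y x' = Submodule.Quotient.mk (y ⊗ₜ[ℤ] x') from rfl,
        Stmt15Aux.Sq_mk, Stmt15Aux.Sq_mk, Stmt15Aux.Slin_tmul, Stmt15Aux.Slin_tmul] at hy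
    calc x = ∑ j, Stmt15Aux.tens x (g j) (e j) := (hsum x).symm
      _ = ∑ j, Stmt15Aux.tens x' (g j) (e j) :=
          Finset.sum_congr rfl fun j _ => by rw [htens j]
      _ = x' := hsum x'
  refine ⟨⟨RI, ?_⟩, ?_⟩
  · -- Right surjectivity.
    intro f hadd hsm
    have hsm' : ∀ (y : M) (r : R), f (op r • y) = kSmul0 α r (f y) := hsm
    let v : Fin n → Module.End Rᵐᵒᵖ M := fun j =>
      { toFun := fun y => Stmt15Aux.Sq (α := α) hβadd hβmul hβα (g j) (f y)
        map_add' := fun y y' => by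
          show Stmt15Aux.Sq (α := α) hβadd hβmul hβα (g j) (f (y + y')) = _
          rw [hadd, map_add]
        map_smul' := fun r y => by
          rcases r with ⟨r⟩
          show Stmt15Aux.Sq (α := α) hβadd hβmul hβα (g j) (f (op r • y))
            = op r • Stmt15Aux.Sq (α := α) hβadd hβmul hβα (g j) (f y)
          rw [hsm' y r]
          exact Stmt15Aux.Sq_smul0 hβadd hβmul hβα (g j) r (f y) }
    refine ⟨∑ j, α (v j) (e j), fun y => ?_⟩
    show f y = Submodule.Quotient.mk (y ⊗ₜ[ℤ] (∑ j, α (v j) (e j)))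
    have h1 : (Submodule.Quotient.mk (y ⊗ₜ[ℤ] (∑ j, α (v j) (e j))) : Kalpha α)
        = ∑ j, (Submodule.Quotient.mk (y ⊗ₜ[ℤ] (α (v j) (e j))) : Kalpha α) := by
      rw [TensorProduct.tmul_sum, ← Submodule.mkQ_apply, map_sum]
      rfl
    have h2 : ∀ j : Fin n, (Submodule.Quotient.mk (y ⊗ₜ[ℤ] (α (v j) (e j))) : Kalpha α)
        = Submodule.Quotient.mk
            ((Stmt15Aux.Sq (α := α) hβadd hβmul hβα (g j) (f y)) ⊗ₜ[ℤ] (e j)) := by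
      intro j
      exact (Stmt15Aux.mk_rel α (v j) y (e j)).symm
    rw [h1, Finset.sum_congr rfl fun j _ => h2 j, idS (f y)]
  · -- Left regularity.
    refine ⟨LI hαinj, ?_⟩
    intro f hadd hsm
    have hsm' : ∀ (y : M) (r : R), f (op r • y) = kSmul1 α r (f y) := hsm
    let w : Fin n → Module.End Rᵐᵒᵖ M := fun j =>
      { toFun := fun y => Stmt15Aux.Tq hα (g j) (f y)
        map_add' := fun y y' => by
          show Stmt15Aux.Tq hα (g j) (f (y + y')) = _
          rw [hadd, map_add]
        map_smul' := fun r y => by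
          rcases r with ⟨r⟩
          show Stmt15Aux.Tq hα (g j) (f (op r • y)) = op r • Stmt15Aux.Tq hα (g j) (f y)
          rw [hsm' y r]
          exact Stmt15Aux.Tq_smul1 hα (g j) r (f y) }
    refine ⟨∑ j, β (w j) (e j), fun y => ?_⟩
    show f y = Submodule.Quotient.mk ((∑ j, β (w j) (e j)) ⊗ₜ[ℤ] y)
    have h1 : (Submodule.Quotient.mk ((∑ j, β (w j) (e j)) ⊗ₜ[ℤ] y) : Kalpha α)
        = ∑ j, (Submodule.Quotient.mk ((β (w j) (e j)) ⊗ₜ[ℤ] y) : Kalpha α) := by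
      rw [TensorProduct.sum_tmul, ← Submodule.mkQ_apply, map_sum]
      rfl
    have h2 : ∀ j : Fin n, (Submodule.Quotient.mk ((β (w j) (e j)) ⊗ₜ[ℤ] y) : Kalpha α)
        = Submodule.Quotient.mk ((e j) ⊗ₜ[ℤ] (Stmt15Aux.Tq hα (g j) (f y))) := by
      intro j
      rw [Stmt15Aux.mk_rel α (β (w j)) (e j) y, hαβ]
      rfl
    rw [h1, Finset.sum_congr rfl fun j _ => h2 j, idT (f y)]
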